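/- Let p ≡ 1 (mod 4) be prime and let l be an even integer with 0 ≤ l ≤ p-3. Then there exists a unique sequence (a_n)_{1≤n≤p-1} with values in {+1, -1} satisfying: a_1 = 1; a_n = a_{p-n} for 1 ≤ n ≤ (p-1)/2; a_n = -a_{l+1-n} for 1 ≤ n ≤ l/2; and a_n = a_{l+1+n} for 1 ≤ n ≤ p-l-2. -/

import Mathlib

/-- The defining conditions of the sequence (a_{p,l}(n))_{1 ≤ n ≤ p-1}. -/
def IsA (p l : ℕ) (a : ℕ → ℤ) : Prop :=
  (∀ n : ℕ, 1 ≤ n → n ≤ p - 1 → a n = 1 ∨ a n = -1) ∧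
  a 1 = 1 ∧
  (∀ n : ℕ, 1 ≤ n → n ≤ (p - 1) / 2 → a n = a (p - n)) ∧
  (∀ n : ℕ, 1 ≤ n → n ≤ l / 2 → a n = - a (l + 1 - n)) ∧
  (∀ n : ℕ, 1 ≤ n → n ≤ p - l - 2 → a n = a (l + 1 + n))

/-- The index function: `fA m u n` is `n*u % m`, with residue `0` replaced by `1`. -/
def fA (m u n : ℕ) : ℕ := if n * u % m = 0 then 1 else n * u % m

/-- The explicit sequence. -/
def seqA (m u : ℕ) (n : ℕ) : ℤ := (-1) ^ (fA m u n + fA m u 1)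

lemma negpow_mod2 (x : ℕ) : ((-1 : ℤ)) ^ x = (-1) ^ (x % 2) := by
  conv_lhs => rw [← Nat.div_add_mod x 2]
  rw [pow_add, pow_mul, neg_one_sq, one_pow, one_mul]

lemma negpow_congr {x y : ℕ} (h : x % 2 = y % 2) : ((-1 : ℤ)) ^ x = (-1) ^ y := by
  rw [negpow_mod2 x, negpow_mod2 y, h]

lemma fA_pos (m u n : ℕ) : 1 ≤ fA m u n := by
  unfold fA; split <;> omega

lemma mod_two_cases {x y m c : ℕ} (hx : x < m) (hy : y < m) (h : (x + y) % m = c)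
    (hc : c < m) : x + y = c ∨ x + y = m + c := by
  rcases Nat.lt_or_ge (x + y) m with h' | h'
  · left; rwa [Nat.mod_eq_of_lt h'] at h
  · right
    rw [Nat.mod_eq_sub_mod h', Nat.mod_eq_of_lt (by omega)] at h
    omega

/-- If `v` is invertible mod `m` and `m ∣ c * v` then `m ∣ c`. -/
lemma dvd_of_dvd_mul_inv {m c v w : ℕ} (hvw : v * w % m = 1 % m) (h : m ∣ c * v) : m ∣ c := by
  have h1 : c * (v * w) % m = (c * 1) % m := Nat.ModEq.mul_left c hvw
  rw [mul_one] at h1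
  have h2 : c * (v * w) % m = 0 := by
    obtain ⟨t, ht⟩ : m ∣ c * (v * w) := by
      rw [show c * (v * w) = c * v * w from (mul_assoc c v w).symm]
      exact h.mul_right w
    rw [ht]; simp [Nat.mul_mod_right]
  exact Nat.dvd_of_mod_eq_zero (h1.symm.trans h2)

section Main

variable (p l u : ℕ)

lemma isA_seqA (hp2 : p % 2 = 1) (hl2 : 2 ≤ l) (hleven : l % 2 = 0)
    (hlp : l + 3 ≤ p) (hu : p * u % (l + 1) = 1) : IsA p l (seqA (l + 1) u) := by
  have hm3 : 3 ≤ l + 1 := by omega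
  have hu' : u * p % (l + 1) = 1 % (l + 1) := by
    rw [mul_comm, hu]; exact (Nat.mod_eq_of_lt (by omega)).symm
  have key1 : ∀ c : ℕ, c % (l + 1) ≠ 0 → c * u % (l + 1) ≠ 0 := by
    intro c hc h0
    have hd : (l + 1) ∣ c := dvd_of_dvd_mul_inv hu' (Nat.dvd_of_mod_eq_zero h0)
    obtain ⟨t, rfl⟩ := hd
    simp [Nat.mul_mod_right] at hc
  refine ⟨?_, ?_, ?_, ?_, ?_⟩
  · intro n _ _
    rcases Nat.even_or_odd (fA (l + 1) u n + fA (l + 1) u 1) with h | h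
    · left; exact h.neg_one_pow
    · right; exact h.neg_one_pow
  · exact Even.neg_one_pow ⟨fA (l + 1) u 1, rfl⟩
  · -- symmetry a n = a (p - n)
    intro n hn1 hn2
    have hn2' : n ≤ p - 1 := by omega
    unfold seqA
    apply negpow_congr
    set x := n * u % (l + 1) with hx
    set y := (p - n) * u % (l + 1) with hy
    have hxm : x < l + 1 := Nat.mod_lt _ (by omega)
    have hym : y < l + 1 := Nat.mod_lt _ (by omega)
    have hsum : (x + y) % (l + 1) = 1 := by
      rw [hx, hy, ← Nat.add_mod, ← add_mul, show n + (p - n) = p from by omega, hu]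
    have := mod_two_cases hxm hym hsum (by omega)
    unfold fA
    rw [← hx, ← hy]
    split_ifs <;> omega
  · -- antisymmetry a n = - a (l+1-n)
    intro n hn1 hn2
    have hnm : n < l + 1 := by omega
    unfold seqA
    set x := n * u % (l + 1) with hx
    set y := (l + 1 - n) * u % (l + 1) with hy
    have hxm : x < l + 1 := Nat.mod_lt _ (by omega)
    have hym : y < l + 1 := Nat.mod_lt _ (by omega)
    have hx0 : x ≠ 0 := by
      rw [hx]; exact key1 n (by rw [Nat.mod_eq_of_lt hnm]; omega)
    have hy0 : y ≠ 0 := by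
      rw [hy]
      exact key1 (l + 1 - n) (by rw [Nat.mod_eq_of_lt (by omega)]; omega)
    have hsum : (x + y) % (l + 1) = 0 := by
      rw [hx, hy, ← Nat.add_mod, ← add_mul, show n + (l + 1 - n) = l + 1 from by omega,
        Nat.mul_mod_right]
    have hxy := mod_two_cases hxm hym hsum (by omega)
    rw [show (-(-1 : ℤ) ^ (fA (l + 1) u (l + 1 - n) + fA (l + 1) u 1))
        = (-1) ^ (fA (l + 1) u (l + 1 - n) + fA (l + 1) u 1 + 1) from by rw [pow_succ]; ring]
    apply negpow_congr
    unfold fA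
    rw [← hx, ← hy]
    split_ifs <;> omega
  · -- periodicity
    intro n hn1 hn2
    unfold seqA
    congr 2
    unfold fA
    rw [show (l + 1 + n) * u = (l + 1) * u + n * u from by ring, Nat.mul_add_mod]

lemma determ (hp2 : p % 2 = 1) (hl2 : 2 ≤ l) (hleven : l % 2 = 0)
    (hlp : l + 3 ≤ p) (hu : p * u % (l + 1) = 1) (a' : ℕ → ℤ) (h : IsA p l a') :
    ∀ n : ℕ, 1 ≤ n → n ≤ p - 1 → a' n = seqA (l + 1) u n := by
  have hm3 : 3 ≤ l + 1 := by omega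
  have hpu' : p * u ≡ 1 [MOD l + 1] := by
    unfold Nat.ModEq; rw [hu]; exact (Nat.mod_eq_of_lt (by omega)).symm
  have hu' : u * p % (l + 1) = 1 % (l + 1) := by
    rw [mul_comm, hu]; exact (Nat.mod_eq_of_lt (by omega)).symm
  have hu'' : p * u % (l + 1) = 1 % (l + 1) := by
    rw [hu]; exact (Nat.mod_eq_of_lt (by omega)).symm
  set r := p % (l + 1) with hrdef
  have hrm : r < l + 1 := Nat.mod_lt _ (by omega)
  have hr0 : r ≠ 0 := by
    intro h0
    have : p * u % (l + 1) = 0 := by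
      rw [Nat.mul_mod, ← hrdef, h0, Nat.zero_mul, Nat.zero_mod]
    omega
  have key1 : ∀ c : ℕ, c % (l + 1) ≠ 0 → c * u % (l + 1) ≠ 0 := by
    intro c hc h0
    have hd : (l + 1) ∣ c := dvd_of_dvd_mul_inv hu' (Nat.dvd_of_mod_eq_zero h0)
    obtain ⟨t, rfl⟩ := hd
    simp [Nat.mul_mod_right] at hc
  have keyc : ∀ c : ℕ, 1 ≤ c → c ≤ l → 1 ≤ c * r % (l + 1) ∧ c * r % (l + 1) ≤ l := by
    intro c h1 h2
    refine ⟨?_, by have := Nat.mod_lt (c * r) (show 0 < l + 1 by omega); omega⟩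
    by_contra h0
    push_neg at h0
    have h0' : c * r % (l + 1) = 0 := by omega
    have hcp : c * p % (l + 1) = 0 := by
      have : c * p ≡ c * r [MOD l + 1] :=
        Nat.ModEq.mul_left c (Nat.mod_modEq p (l + 1)).symm
      have h' : c * p % (l + 1) = c * r % (l + 1) := this
      omega
    have hd : (l + 1) ∣ c := dvd_of_dvd_mul_inv hu'' (Nat.dvd_of_mod_eq_zero hcp)
    have := Nat.le_of_dvd (by omega) hd
    omega
  obtain ⟨hval, hone, hsym, hanti, hper⟩ := h
  -- periodicity step
  have per : ∀ n : ℕ, 1 ≤ n → n + (l + 1) ≤ p - 1 → a' n = a' (n + (l + 1)) := by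
    intro n h1 h2
    have := hper n h1 (by omega)
    rwa [show l + 1 + n = n + (l + 1) from by omega] at this
  -- reduction to canonical representative
  have L1 : ∀ n : ℕ, 1 ≤ n → n ≤ p - 1 →
      a' n = a' (if n % (l + 1) = 0 then l + 1 else n % (l + 1)) := by
    intro n
    induction n using Nat.strong_induction_on with
    | _ n ih =>
      intro h1 h2
      by_cases hc : n ≤ l + 1
      · rcases eq_or_lt_of_le hc with he | hlt
        · rw [he]; simp [Nat.mod_self]
        · rw [Nat.mod_eq_of_lt hlt, if_neg (by omega)]
      · push_neg at hc
        have e1 := per (n - (l + 1)) (by omega) (by omega)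
        rw [show n - (l + 1) + (l + 1) = n from by omega] at e1
        have e3 : (n - (l + 1)) % (l + 1) = n % (l + 1) := by
          conv_rhs => rw [show n = n - (l + 1) + (l + 1) from by omega]
          rw [Nat.add_mod_right]
        rw [← e1, ← e3]
        exact ih (n - (l + 1)) (by omega) (by omega) (by omega)
  -- full reflection
  have L2 : ∀ n : ℕ, 1 ≤ n → n ≤ p - 1 → a' n = a' (p - n) := by
    intro n h1 h2
    rcases le_or_gt n ((p - 1) / 2) with hc | hc
    · exact hsym n h1 hc
    · have e := hsym (p - n) (by omega) (by omega)
      rw [show p - (p - n) = n from by omega] at e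
      exact e.symm
  -- full antisymmetry
  have L3 : ∀ c : ℕ, 1 ≤ c → c ≤ l → a' c = - a' (l + 1 - c) := by
    intro c h1 h2
    rcases le_or_gt c (l / 2) with hc | hc
    · exact hanti c h1 hc
    · have e := hanti (l + 1 - c) (by omega) (by omega)
      rw [show l + 1 - (l + 1 - c) = c from by omega] at e
      rw [e]; ring
  -- the chain lemma
  have Q : ∀ k : ℕ, 1 ≤ k → k ≤ l →
      a' (k * r % (l + 1)) = (-1 : ℤ) ^ (k - 1) * a' r := by
    intro k hk1
    induction k, hk1 using Nat.le_induction with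
    | base =>
      intro _
      rw [one_mul, Nat.mod_eq_of_lt hrm]
      simp
    | succ k hk ih =>
      intro hk2
      have ihh := ih (by omega)
      set c := k * r % (l + 1) with hc
      have hcb := keyc k (by omega) (by omega)
      set c' := (k + 1) * r % (l + 1) with hc'
      have hcb' := keyc (k + 1) (by omega) (by omega)
      have e0 : c' = (c + r) % (l + 1) := by
        rw [hc', hc, show (k + 1) * r = k * r + r from by ring, Nat.add_mod (k * r) r,
          Nat.mod_eq_of_lt hrm]
      have s1 : a' c' = a' (p - c') := L2 c' (by omega) (by omega)
      have s2 := L1 (p - c') (by omega) (by omega)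
      have e1 : (p - c') % (l + 1) = l + 1 - c := by
        have m1 : (p - c') + (c + r) ≡ r [MOD l + 1] := by
          calc (p - c') + (c + r) ≡ (p - c') + c' [MOD l + 1] :=
                Nat.ModEq.add_left _ (by rw [e0]; exact (Nat.mod_modEq _ _).symm)
            _ = p := by omega
            _ ≡ r [MOD l + 1] := (Nat.mod_modEq p (l + 1)).symm
        have m2 : (l + 1 - c) + (c + r) ≡ r [MOD l + 1] := by
          rw [show (l + 1 - c) + (c + r) = (l + 1) + r from by omega]
          unfold Nat.ModEq
          rw [Nat.add_mod_left]
        have m3 : (p - c') ≡ (l + 1 - c) [MOD l + 1] :=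
          Nat.ModEq.add_right_cancel' (c + r) (m1.trans m2.symm)
        have : (p - c') % (l + 1) = (l + 1 - c) % (l + 1) := m3
        rw [this, Nat.mod_eq_of_lt (by omega)]
      rw [e1, if_neg (by omega)] at s2
      have s3 : a' (l + 1 - c) = - a' c := by
        rw [L3 c hcb.1 hcb.2]; ring
      calc a' c' = a' (l + 1 - c) := s1.trans s2
        _ = - a' c := s3
        _ = - ((-1 : ℤ) ^ (k - 1) * a' r) := by rw [ihh]
        _ = (-1 : ℤ) ^ (k + 1 - 1) * a' r := by
            rw [show k + 1 - 1 = (k - 1) + 1 from by omega, pow_succ]; ring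
  -- class zero
  have class0 : a' (l + 1) = a' r := by
    have s1 : a' (l + 1) = a' (p - (l + 1)) := L2 (l + 1) (by omega) (by omega)
    have s2 := L1 (p - (l + 1)) (by omega) (by omega)
    have e1 : (p - (l + 1)) % (l + 1) = r := by
      rw [hrdef]
      conv_rhs => rw [show p = p - (l + 1) + (l + 1) from by omega]
      rw [Nat.add_mod_right]
    rw [e1, if_neg hr0] at s2
    exact s1.trans s2
  -- general formula with unknown a' r
  have gen : ∀ n : ℕ, 1 ≤ n → n ≤ p - 1 →
      a' n = (-1 : ℤ) ^ (fA (l + 1) u n - 1) * a' r := by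
    intro n h1 h2
    have hL := L1 n h1 h2
    by_cases h0 : n % (l + 1) = 0
    · have he : n * u % (l + 1) = 0 := by
        rw [Nat.mul_mod, h0, Nat.zero_mul, Nat.zero_mod]
      rw [if_pos h0] at hL
      rw [hL, class0]
      unfold fA
      rw [if_pos he]
      simp
    · have he : n * u % (l + 1) ≠ 0 := key1 n h0
      set k := n * u % (l + 1) with hk
      have hkm : k < l + 1 := Nat.mod_lt _ (by omega)
      have hQ := Q k (by omega) (by omega)
      have e2 : n % (l + 1) = k * r % (l + 1) := by
        have c1 : k * r ≡ n * u * p [MOD l + 1] := by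
          calc k * r ≡ (n * u) * r [MOD l + 1] :=
                Nat.ModEq.mul_right r (by rw [hk]; exact Nat.mod_modEq _ _)
            _ ≡ (n * u) * p [MOD l + 1] :=
                Nat.ModEq.mul_left _ (by rw [hrdef]; exact Nat.mod_modEq _ _)
        have c2 : n * u * p ≡ n [MOD l + 1] := by
          calc n * u * p = n * (p * u) := by ring
            _ ≡ n * 1 [MOD l + 1] := Nat.ModEq.mul_left n hpu'
            _ = n := mul_one n
        exact (c1.trans c2).symm
      have hkr := keyc k (by omega) (by omega)
      rw [e2, if_neg (by omega)] at hL
      rw [hL, hQ]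
      unfold fA
      rw [if_neg he]
  -- pin down a' r
  have har : a' r = (-1 : ℤ) ^ (fA (l + 1) u 1 - 1) := by
    have g1 := gen 1 le_rfl (by omega)
    rw [hone] at g1
    set j := fA (l + 1) u 1 - 1 with hj
    have hsq : ((-1 : ℤ)) ^ j * (-1) ^ j = 1 := by
      rw [← pow_add]; exact Even.neg_one_pow ⟨j, rfl⟩
    calc a' r = ((-1 : ℤ) ^ j * (-1) ^ j) * a' r := by rw [hsq, one_mul]
      _ = (-1 : ℤ) ^ j * ((-1) ^ j * a' r) := by ring
      _ = (-1 : ℤ) ^ j * 1 := by rw [← g1]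
      _ = (-1 : ℤ) ^ j := mul_one _
  intro n h1 h2
  rw [gen n h1 h2, har, ← pow_add]
  unfold seqA
  apply negpow_congr
  have t1 := fA_pos (l + 1) u n
  have t2 := fA_pos (l + 1) u 1
  omega

end Main

theorem stmt7 (p : ℕ) (hp : p.Prime) (hp4 : p % 4 = 1) (l : ℕ)
    (hleven : Even l) (hl : l ≤ p - 3) :
    ∃ a : ℕ → ℤ, IsA p l a ∧
      ∀ a' : ℕ → ℤ, IsA p l a' → ∀ n : ℕ, 1 ≤ n → n ≤ p - 1 → a' n = a n := by
  have hp2le := hp.two_le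
  have hp5 : 5 ≤ p := by omega
  have hp2 : p % 2 = 1 := by omega
  have hlev : l % 2 = 0 := Nat.even_iff.mp hleven
  rcases Nat.eq_zero_or_pos l with hl0 | hlpos
  · subst hl0
    refine ⟨fun _ => (1 : ℤ), ⟨fun n _ _ => Or.inl rfl, rfl, fun _ _ _ => rfl,
      fun n hn1 hn2 => absurd hn2 (by omega), fun _ _ _ => rfl⟩, ?_⟩
    intro a' ha' n hn1 hn2
    obtain ⟨_, hone, _, _, hper⟩ := ha'
    have key : ∀ n : ℕ, 1 ≤ n → n ≤ p - 1 → a' n = 1 := by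
      intro n
      induction n using Nat.strong_induction_on with
      | _ n ih =>
        intro h1 h2
        rcases eq_or_lt_of_le h1 with he | hlt
        · rw [← he]; exact hone
        · have e := hper (n - 1) (by omega) (by omega)
          rw [show 0 + 1 + (n - 1) = n from by omega] at e
          rw [← e]
          exact ih (n - 1) (by omega) (by omega) (by omega)
    exact key n hn1 hn2
  · have hl2 : 2 ≤ l := by omega
    have hlp : l + 3 ≤ p := by omega
    have hco : Nat.Coprime p (l + 1) :=
      (Nat.Prime.coprime_iff_not_dvd hp).mpr
        (fun hdvd => by have := Nat.le_of_dvd (by omega) hdvd; omega)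
    obtain ⟨u, -, hu⟩ := Nat.exists_mul_mod_eq_one_of_coprime hco (by omega)
    exact ⟨seqA (l + 1) u, isA_seqA p l u hp2 hl2 hlev hlp hu,
      fun a' ha' n h1 h2 => determ p l u hp2 hl2 hlev hlp hu a' ha' n h1 h2⟩
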